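/- Normalized heights count flips: let D be a tileable domain with minimal tiling T_min, let T be any tiling of D, and let T_min = T_0, T_1, …, T_p = T be any sequence of tilings in which each T_{i+1} is obtained from T_i by an upward flip. Then for every interior vertex v, the number of indices i such that the flip from T_i to T_{i+1} is performed at v equals (h_T(v) − h_{T_min}(v))/4; in particular this number is the same for every such sequence. -/

import Mathlib

namespace DominoTiling

/-!
Domino tilings of simply connected domains in the square lattice,
following Desreux–Rémila, "An optimal algorithm to generate tilings".
-/

abbrev Cell : Type := ℤ × ℤ
abbrev Vertex : Type := ℤ × ℤ

/-- The closed unit square of the cell with lower-left corner `c`. -/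
def cellSquare (c : Cell) : Set (ℝ × ℝ) :=
  Set.Icc ((c.1 : ℝ), (c.2 : ℝ)) ((c.1 : ℝ) + 1, (c.2 : ℝ) + 1)

/-- The closed union of the cells of `D`. -/
def regionOf (D : Set Cell) : Set (ℝ × ℝ) :=
  ⋃ c ∈ D, cellSquare c

/-- A domain: a finite nonempty set of cells whose union is a simply connected
subset of the plane. -/
structure IsDomain (D : Set Cell) : Prop where
  finite : D.Finite
  nonempty : D.Nonempty
  simplyConnected : SimplyConnectedSpace (regionOf D)

def embedV (v : Vertex) : ℝ × ℝ := ((v.1 : ℝ), (v.2 : ℝ))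

/-- The four corners of a cell. -/
def cornersOf (c : Cell) : Set Vertex :=
  {c, (c.1 + 1, c.2), (c.1, c.2 + 1), (c.1 + 1, c.2 + 1)}

/-- A vertex of `D`: a point of `ℤ²` lying in the closed union of `D`. -/
def IsVertexOf (D : Set Cell) (v : Vertex) : Prop :=
  embedV v ∈ regionOf D

/-- A boundary vertex of `D`: a vertex on the topological boundary of the union. -/
def IsBoundaryVertexOf (D : Set Cell) (v : Vertex) : Prop :=
  IsVertexOf D v ∧ embedV v ∈ frontier (regionOf D)

/-- An interior vertex of `D`: a vertex not on the topological boundary. -/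
def IsInteriorVertexOf (D : Set Cell) (v : Vertex) : Prop :=
  IsVertexOf D v ∧ embedV v ∉ frontier (regionOf D)

/-- Directed lattice edges, directed clockwise around black cells (cells whose
coordinate sum is even), equivalently counterclockwise around white cells:
vertical edges leave vertices of even coordinate sum, horizontal edges leave
vertices of odd coordinate sum. -/
def IsDirEdge (v w : Vertex) : Prop :=
  (Even (v.1 + v.2) ∧ (w = (v.1, v.2 + 1) ∨ w = (v.1, v.2 - 1))) ∨
  (¬ Even (v.1 + v.2) ∧ (w = (v.1 + 1, v.2) ∨ w = (v.1 - 1, v.2)))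

/-- A directed lattice edge lying in the closed union of `D` (equivalently, its
two endpoints are corners of a common cell of `D`). -/
def EdgeInDomain (D : Set Cell) (v w : Vertex) : Prop :=
  IsDirEdge v w ∧ ∃ c ∈ D, v ∈ cornersOf c ∧ w ∈ cornersOf c

/-- A domino: a union of two cells sharing an edge. -/
def IsDomino (d : Set Cell) : Prop :=
  ∃ a b : ℤ, d = {(a, b), (a + 1, b)} ∨ d = {(a, b), (a, b + 1)}

/-- The central axis of a domino, as an unordered pair `{v, w}` of vertices:
the common side of its two cells. -/
def IsCentralAxis (d : Set Cell) (v w : Vertex) : Prop :=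
  ∃ a b : ℤ,
    (d = {(a, b), (a + 1, b)} ∧ ({v, w} : Set Vertex) = {(a + 1, b), (a + 1, b + 1)}) ∨
    (d = {(a, b), (a, b + 1)} ∧ ({v, w} : Set Vertex) = {(a, b + 1), (a + 1, b + 1)})

/-- A tiling of `D`: a set of dominoes that partitions `D`. -/
def IsTiling (D : Set Cell) (T : Set (Set Cell)) : Prop :=
  (∀ d ∈ T, IsDomino d) ∧ T.PairwiseDisjoint id ∧ ⋃₀ T = D

/-- `h` is a height function for the tiling `T` of `D` with origin `O`:
`h O = 0`, and along every directed edge `(v, w)` lying in the closed union of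
`D`, `h w = h v - 3` if the edge is the central axis of a domino of `T`, and
`h w = h v + 1` otherwise. -/
def IsHeightFunction (D : Set Cell) (O : Vertex) (T : Set (Set Cell))
    (h : Vertex → ℤ) : Prop :=
  h O = 0 ∧
  ∀ v w : Vertex, EdgeInDomain D v w →
    ((∃ d ∈ T, IsCentralAxis d v w) → h w = h v - 3) ∧
    (¬ (∃ d ∈ T, IsCentralAxis d v w) → h w = h v + 1)

/-- The order on tilings: `T ≤ T'` iff `h_T ≤ h_{T'}` pointwise on the
vertices of `D`. -/
def TilingLE (D : Set Cell) (O : Vertex) (T T' : Set (Set Cell)) : Prop :=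
  ∀ h h' : Vertex → ℤ, IsHeightFunction D O T h → IsHeightFunction D O T' h' →
    ∀ v : Vertex, IsVertexOf D v → h v ≤ h' v

/-- The two horizontal dominoes filling the 2×2 square of cells centered at
the vertex `v`. -/
def hDominoes (v : Vertex) : Set (Set Cell) :=
  { {(v.1 - 1, v.2 - 1), (v.1, v.2 - 1)}, {(v.1 - 1, v.2), (v.1, v.2)} }

/-- The two vertical dominoes filling the 2×2 square of cells centered at
the vertex `v`. -/
def vDominoes (v : Vertex) : Set (Set Cell) :=
  { {(v.1 - 1, v.2 - 1), (v.1 - 1, v.2)}, {(v.1, v.2 - 1), (v.1, v.2)} }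

/-- Upward flip at the interior vertex `v`: the two dominoes of `T` whose
central axes are the directed edges ending at `v` are replaced by the two
other dominoes covering the same 2×2 square, whose central axes are the
directed edges starting at `v`. -/
def UpwardFlip (D : Set Cell) (v : Vertex) (T T' : Set (Set Cell)) : Prop :=
  IsInteriorVertexOf D v ∧
  ((Even (v.1 + v.2) ∧ vDominoes v ⊆ T ∧ T' = (T \ vDominoes v) ∪ hDominoes v) ∨
   (¬ Even (v.1 + v.2) ∧ hDominoes v ⊆ T ∧ T' = (T \ hDominoes v) ∪ vDominoes v))

/-- A flip is an upward flip or a downward flip (the reverse operation). -/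
def Flip (D : Set Cell) (v : Vertex) (T T' : Set (Set Cell)) : Prop :=
  UpwardFlip D v T T' ∨ UpwardFlip D v T' T

/-- `w` is one of the four lattice neighbours of `v`. -/
def Adjacent (v w : Vertex) : Prop :=
  w = (v.1 + 1, v.2) ∨ w = (v.1 - 1, v.2) ∨ w = (v.1, v.2 + 1) ∨ w = (v.1, v.2 - 1)

/-- `v` is a local maximum of `h`: an interior vertex whose height exceeds the
heights of its four neighbours. -/
def IsLocalMax (D : Set Cell) (h : Vertex → ℤ) (v : Vertex) : Prop :=
  IsInteriorVertexOf D v ∧ ∀ w : Vertex, Adjacent v w → h w < h v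

/-- `v` is a local minimum of `h`: an interior vertex whose height is below the
heights of its four neighbours. -/
def IsLocalMin (D : Set Cell) (h : Vertex → ℤ) (v : Vertex) : Prop :=
  IsInteriorVertexOf D v ∧ ∀ w : Vertex, Adjacent v w → h v < h w



-- ===== auxiliary lemmas =====

lemma mem_cornersOf {v : Vertex} {c : Cell} :
    v ∈ cornersOf c ↔ (v.1 = c.1 ∨ v.1 = c.1 + 1) ∧ (v.2 = c.2 ∨ v.2 = c.2 + 1) := by
  rcases v with ⟨x, y⟩; rcases c with ⟨a, b⟩
  simp only [cornersOf, Set.mem_insert_iff, Set.mem_singleton_iff, Prod.mk.injEq,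
    Prod.ext_iff]
  omega

lemma regionOf_closed {A : Set Cell} (hA : A.Finite) : IsClosed (regionOf A) :=
  hA.isClosed_biUnion (fun _ _ => isClosed_Icc)

lemma mem_cellSquare {c : Cell} {p : ℝ × ℝ} :
    p ∈ cellSquare c ↔ (c.1 : ℝ) ≤ p.1 ∧ p.1 ≤ c.1 + 1 ∧ (c.2 : ℝ) ≤ p.2 ∧ p.2 ≤ c.2 + 1 := by
  simp only [cellSquare, Set.mem_Icc, Prod.le_def]; push_cast; tauto

lemma corner_mem_square {c : Cell} : ((c.1 : ℝ), (c.2 : ℝ)) ∈ cellSquare c := by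
  rw [mem_cellSquare]; norm_num

lemma mem_regionOf {D : Set Cell} {p : ℝ × ℝ} :
    p ∈ regionOf D ↔ ∃ c ∈ D, p ∈ cellSquare c := by
  simp [regionOf]

lemma squares_touch {c c' : Cell} (h : (cellSquare c ∩ cellSquare c').Nonempty) :
    ∃ w : Vertex, w ∈ cornersOf c ∧ w ∈ cornersOf c' := by
  obtain ⟨p, hp, hp'⟩ := h
  rw [mem_cellSquare] at hp hp'
  have h1 : c.1 ≤ c'.1 + 1 := by exact_mod_cast hp.1.trans hp'.2.1
  have h2 : c'.1 ≤ c.1 + 1 := by exact_mod_cast hp'.1.trans hp.2.1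
  have h3 : c.2 ≤ c'.2 + 1 := by exact_mod_cast hp.2.2.1.trans hp'.2.2.2
  have h4 : c'.2 ≤ c.2 + 1 := by exact_mod_cast hp'.2.2.1.trans hp.2.2.2
  refine ⟨(max c.1 c'.1, max c.2 c'.2), ?_, ?_⟩ <;>
    rw [mem_cornersOf] <;> constructor <;> simp <;> omega

lemma vertex_mem_corner {D : Set Cell} {v : Vertex} (h : IsVertexOf D v) :
    ∃ c ∈ D, v ∈ cornersOf c := by
  obtain ⟨c, hc, hm⟩ := mem_regionOf.mp h
  rw [mem_cellSquare] at hm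
  simp only [embedV] at hm
  obtain ⟨a1, b1, a2, b2⟩ := hm
  refine ⟨c, hc, mem_cornersOf.mpr ⟨?_, ?_⟩⟩
  · have h1 : c.1 ≤ v.1 := by exact_mod_cast a1
    have h2 : v.1 ≤ c.1 + 1 := by exact_mod_cast b1
    omega
  · have h1 : c.2 ≤ v.2 := by exact_mod_cast a2
    have h2 : v.2 ≤ c.2 + 1 := by exact_mod_cast b2
    omega

/-- Cell-level connectivity of a domain. -/
lemma cell_chain {D : Set Cell} (hD : IsDomain D) {c0 : Cell} (hc0 : c0 ∈ D) :
    ∀ c ∈ D, Relation.ReflTransGen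
      (fun x y => y ∈ D ∧ (cellSquare x ∩ cellSquare y).Nonempty) c0 c := by
  set rel : Cell → Cell → Prop :=
    fun x y => y ∈ D ∧ (cellSquare x ∩ cellSquare y).Nonempty with hrel
  set A : Set Cell := {c | c ∈ D ∧ Relation.ReflTransGen rel c0 c} with hA
  have hAD : A ⊆ D := fun c hc => hc.1
  have hc0A : c0 ∈ A := ⟨hc0, Relation.ReflTransGen.refl⟩
  -- topology
  have := hD.simplyConnected
  have hpc : PathConnectedSpace (regionOf D) := inferInstance
  have hconn : IsPreconnected (regionOf D) := by
    have : IsPathConnected (regionOf D) := by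
      rwa [isPathConnected_iff_pathConnectedSpace]
    exact this.isConnected.isPreconnected
  have hsplit := (isPreconnected_iff_subset_of_fully_disjoint_closed
    (regionOf_closed hD.finite)).mp hconn (regionOf A) (regionOf (D \ A))
    (regionOf_closed (hD.finite.subset hAD))
    (regionOf_closed (hD.finite.subset (Set.diff_subset)))
    (by
      intro p hp
      obtain ⟨c, hc, hm⟩ := mem_regionOf.mp hp
      by_cases hcA : c ∈ A
      · exact Or.inl (mem_regionOf.mpr ⟨c, hcA, hm⟩)
      · exact Or.inr (mem_regionOf.mpr ⟨c, ⟨hc, hcA⟩, hm⟩))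
    (by
      rw [Set.disjoint_left]
      intro p hpu hpw
      obtain ⟨x, hx, hmx⟩ := mem_regionOf.mp hpu
      obtain ⟨y, hy, hmy⟩ := mem_regionOf.mp hpw
      exact hy.2 ⟨hy.1, hx.2.tail ⟨hy.1, ⟨p, hmx, hmy⟩⟩⟩)
  have hu : regionOf D ⊆ regionOf A := by
    rcases hsplit with h | h
    · exact h
    · exfalso
      have hp0 : ((c0.1 : ℝ), (c0.2 : ℝ)) ∈ regionOf D :=
        mem_regionOf.mpr ⟨c0, hc0, corner_mem_square⟩
      obtain ⟨y, hy, hmy⟩ := mem_regionOf.mp (h hp0)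
      exact hy.2 ⟨hy.1, hc0A.2.tail ⟨hy.1, ⟨_, corner_mem_square, hmy⟩⟩⟩
  intro c hc
  have hp : ((c.1 : ℝ), (c.2 : ℝ)) ∈ regionOf A :=
    hu (mem_regionOf.mpr ⟨c, hc, corner_mem_square⟩)
  obtain ⟨x, hx, hmx⟩ := mem_regionOf.mp hp
  exact hx.2.tail ⟨hc, ⟨_, hmx, corner_mem_square⟩⟩

-- ===== height uniqueness =====

lemma height_diff_const {D : Set Cell} {O : Vertex} {T : Set (Set Cell)}
    {h1 h2 : Vertex → ℤ} (H1 : IsHeightFunction D O T h1)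
    (H2 : IsHeightFunction D O T h2) {v w : Vertex} (e : EdgeInDomain D v w) :
    h1 w - h2 w = h1 v - h2 v := by
  by_cases hax : ∃ d ∈ T, IsCentralAxis d v w
  · rw [(H1.2 v w e).1 hax, (H2.2 v w e).1 hax]; ring
  · rw [(H1.2 v w e).2 hax, (H2.2 v w e).2 hax]; ring

lemma g_const_on_cell {D : Set Cell} {g : Vertex → ℤ}
    (hg : ∀ v w : Vertex, EdgeInDomain D v w → g w = g v)
    {c : Cell} (hc : c ∈ D) :
    ∀ v ∈ cornersOf c, ∀ w ∈ cornersOf c, g v = g w := by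
  obtain ⟨a, b⟩ := c
  -- the four corners
  have m00 : ((a, b) : Vertex) ∈ cornersOf (a, b) := by rw [mem_cornersOf]; omega
  have m10 : ((a + 1, b) : Vertex) ∈ cornersOf (a, b) := by rw [mem_cornersOf]; omega
  have m01 : ((a, b + 1) : Vertex) ∈ cornersOf (a, b) := by rw [mem_cornersOf]; omega
  have m11 : ((a + 1, b + 1) : Vertex) ∈ cornersOf (a, b) := by rw [mem_cornersOf]; omega
  -- horizontal edge (a,b)-(a+1,b)
  have e1 : g (a + 1, b) = g (a, b) := by
    rcases Int.even_or_odd (a + b) with hpar | hpar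
    · -- (a+1,b) is odd, edge from (a+1,b) to (a,b)
      have := hg (a + 1, b) (a, b)
        ⟨Or.inr ⟨by simp only [Int.even_iff] at hpar ⊢; omega,
          Or.inr (by simp)⟩, ⟨(a, b), hc, m10, m00⟩⟩
      omega
    · have := hg (a, b) (a + 1, b)
        ⟨Or.inr ⟨by simp [Int.even_iff, Int.odd_iff] at hpar ⊢; omega, Or.inl rfl⟩,
          ⟨(a, b), hc, m00, m10⟩⟩
      omega
  -- vertical edge (a,b)-(a,b+1)
  have e2 : g (a, b + 1) = g (a, b) := by
    rcases Int.even_or_odd (a + b) with hpar | hpar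
    · exact hg (a, b) (a, b + 1) ⟨Or.inl ⟨hpar, Or.inl rfl⟩, ⟨(a, b), hc, m00, m01⟩⟩
    · have := hg (a, b + 1) (a, b)
        ⟨Or.inl ⟨by simp [Int.even_iff, Int.odd_iff] at hpar ⊢; omega,
          Or.inr (by simp)⟩, ⟨(a, b), hc, m01, m00⟩⟩
      omega
  -- vertical edge (a+1,b)-(a+1,b+1)
  have e3 : g (a + 1, b + 1) = g (a + 1, b) := by
    rcases Int.even_or_odd (a + 1 + b) with hpar | hpar
    · exact hg (a + 1, b) (a + 1, b + 1) ⟨Or.inl ⟨hpar, Or.inl rfl⟩, ⟨(a, b), hc, m10, m11⟩⟩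
    · have := hg (a + 1, b + 1) (a + 1, b)
        ⟨Or.inl ⟨by simp [Int.even_iff, Int.odd_iff] at hpar ⊢; omega,
          Or.inr (by simp)⟩, ⟨(a, b), hc, m11, m10⟩⟩
      omega
  intro v hv w hw
  rw [mem_cornersOf] at hv hw
  obtain ⟨x, y⟩ := v; obtain ⟨z, t⟩ := w
  simp only at hv hw
  have key : ∀ u : Vertex, u ∈ cornersOf (a, b) → g u = g (a, b) := by
    intro u hu
    rw [mem_cornersOf] at hu
    obtain ⟨x, y⟩ := u
    simp only at hu
    rcases hu.1 with rfl | rfl <;> rcases hu.2 with rfl | rfl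
    · rfl
    · exact e2
    · exact e1
    · rw [e3, e1]
  rw [key (x, y) (mem_cornersOf.mpr (by simp; omega)),
    key (z, t) (mem_cornersOf.mpr (by simp; omega))]

lemma height_unique {D : Set Cell} (hD : IsDomain D) {O : Vertex}
    (hOv : IsVertexOf D O) {T : Set (Set Cell)} {h1 h2 : Vertex → ℤ}
    (H1 : IsHeightFunction D O T h1) (H2 : IsHeightFunction D O T h2)
    {v : Vertex} (hv : IsVertexOf D v) : h1 v = h2 v := by
  set g : Vertex → ℤ := fun w => h1 w - h2 w with hgdef
  have hg : ∀ p q : Vertex, EdgeInDomain D p q → g q = g p := by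
    intro p q e; exact height_diff_const H1 H2 e
  obtain ⟨cO, hcO, hOc⟩ := vertex_mem_corner hOv
  obtain ⟨cv, hcv, hvc⟩ := vertex_mem_corner hv
  have chain := cell_chain hD hcO cv hcv
  have main : ∀ c : Cell,
      Relation.ReflTransGen
        (fun x y => y ∈ D ∧ (cellSquare x ∩ cellSquare y).Nonempty) cO c →
      c ∈ D ∧ ∀ w ∈ cornersOf c, g w = g O := by
    intro c hchain
    induction hchain with
    | refl => exact ⟨hcO, fun w hw => g_const_on_cell hg hcO w hw O hOc⟩
    | tail hbc hrel ih =>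
      rename_i b c'
      obtain ⟨u, hub, huc⟩ := squares_touch hrel.2
      refine ⟨hrel.1, fun w hw => ?_⟩
      rw [g_const_on_cell hg hrel.1 w hw u huc, ih.2 u hub]
  have h0 : g O = 0 := by simp [hgdef, H1.1, H2.1]
  have := (main cv chain).2 v hvc
  rw [h0] at this
  simpa [hgdef] using sub_eq_zero.mp this

lemma axis_eq_axis {d : Set Cell} {p q p' q' : Vertex} (h : IsCentralAxis d p q)
    (h' : IsCentralAxis d p' q') : ({p, q} : Set Vertex) = {p', q'} := by
  obtain ⟨a, b, h | h⟩ := h <;> obtain ⟨a', b', h' | h'⟩ := h' <;>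
    [skip; exfalso; exfalso; skip] <;>
    have e := h.1.symm.trans h'.1 <;>
    rw [Set.pair_eq_pair_iff] at e <;>
    simp only [Prod.mk.injEq] at e
  · obtain ⟨rfl, rfl⟩ : a = a' ∧ b = b' := by omega
    exact h.2.trans h'.2.symm
  · omega
  · omega
  · obtain ⟨rfl, rfl⟩ : a = a' ∧ b = b' := by omega
    exact h.2.trans h'.2.symm

lemma axis_det_domino {d d' : Set Cell} {p q : Vertex} (h : IsCentralAxis d p q)
    (h' : IsCentralAxis d' p q) : d = d' := by
  obtain ⟨a, b, h | h⟩ := h <;> obtain ⟨a', b', h' | h'⟩ := h' <;>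
    [skip; exfalso; exfalso; skip] <;>
    have e := h.2.symm.trans h'.2 <;>
    rw [Set.pair_eq_pair_iff] at e <;>
    simp only [Prod.mk.injEq] at e
  · obtain ⟨rfl, rfl⟩ : a = a' ∧ b = b' := by omega
    exact h.1.trans h'.1.symm
  · omega
  · omega
  · obtain ⟨rfl, rfl⟩ : a = a' ∧ b = b' := by omega
    exact h.1.trans h'.1.symm


lemma flip_height_core {D : Set Cell} {O : Vertex} {T T' : Set (Set Cell)}
    {v in1 in2 out1 out2 : Vertex} {R1 R2 A1 A2 : Set Cell}
    (hR1 : R1 ∈ T) (hR2 : R2 ∈ T) (hA1 : A1 ∉ T) (hA2 : A2 ∉ T)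
    (hT' : T' = (T \ {R1, R2}) ∪ {A1, A2})
    (hax1 : IsCentralAxis R1 in1 v) (hax2 : IsCentralAxis R2 in2 v)
    (hax3 : IsCentralAxis A1 v out1) (hax4 : IsCentralAxis A2 v out2)
    (hclass : ∀ p q : Vertex, EdgeInDomain D p q →
      (q = v → p = in1 ∨ p = in2) ∧ (p = v → q = out1 ∨ q = out2))
    (hne1 : in1 ≠ v) (hne2 : in2 ≠ v) (hne3 : out1 ≠ v) (hne4 : out2 ≠ v)
    (hio11 : in1 ≠ out1) (hio12 : in1 ≠ out2) (hio21 : in2 ≠ out1) (hio22 : in2 ≠ out2)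
    (hOv : O ≠ v) {h : Vertex → ℤ} (hh : IsHeightFunction D O T h) :
    IsHeightFunction D O T' (fun w => if w = v then h w + 4 else h w) := by
  constructor
  · simp only [if_neg hOv, hh.1]
  intro p q e
  by_cases hq : q = v
  · subst hq
    -- incoming edge: was an axis in T, is not an axis in T'
    have hp := (hclass p q e).1 rfl
    have hpR : ∃ R ∈ T, IsCentralAxis R p q ∧ (R = R1 ∨ R = R2) := by
      rcases hp with rfl | rfl
      · exact ⟨R1, hR1, hax1, Or.inl rfl⟩
      · exact ⟨R2, hR2, hax2, Or.inr rfl⟩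
    obtain ⟨R, hRT, haxR, hRor⟩ := hpR
    have hpne : p ≠ q := by rcases hp with rfl | rfl <;> assumption
    have exT : ∃ d ∈ T, IsCentralAxis d p q := ⟨R, hRT, haxR⟩
    have notT' : ¬ ∃ d ∈ T', IsCentralAxis d p q := by
      rintro ⟨d, hd, hax⟩
      rw [hT'] at hd
      rcases hd with ⟨_, hdR⟩ | hdA
      · exact hdR (by
          have := axis_det_domino hax haxR
          rcases hRor with rfl | rfl
          · exact Or.inl this
          · exact Or.inr this)
      · rcases hp with rfl | rfl <;> rcases hdA with rfl | rfl
        · have e' := axis_eq_axis hax hax3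
          rw [Set.pair_eq_pair_iff] at e'
          rcases e' with ⟨h1, _⟩ | ⟨h1, _⟩
          · exact hne1 h1
          · exact hio11 h1
        · have e' := axis_eq_axis hax hax4
          rw [Set.pair_eq_pair_iff] at e'
          rcases e' with ⟨h1, _⟩ | ⟨h1, _⟩
          · exact hne1 h1
          · exact hio12 h1
        · have e' := axis_eq_axis hax hax3
          rw [Set.pair_eq_pair_iff] at e'
          rcases e' with ⟨h1, _⟩ | ⟨h1, _⟩
          · exact hne2 h1
          · exact hio21 h1
        · have e' := axis_eq_axis hax hax4
          rw [Set.pair_eq_pair_iff] at e'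
          rcases e' with ⟨h1, _⟩ | ⟨h1, _⟩
          · exact hne2 h1
          · exact hio22 h1
    have hhq := (hh.2 p q e).1 exT
    refine ⟨fun hex => absurd hex notT', fun _ => ?_⟩
    simp [if_neg hpne]
    linarith
  · by_cases hp : p = v
    · subst hp
      -- outgoing edge: was not an axis in T, is an axis in T'
      have hqo := (hclass p q e).2 rfl
      have hAq : ∃ A, IsCentralAxis A p q ∧ (A = A1 ∨ A = A2) := by
        rcases hqo with rfl | rfl
        · exact ⟨A1, hax3, Or.inl rfl⟩
        · exact ⟨A2, hax4, Or.inr rfl⟩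
      obtain ⟨A, haxA, hAor⟩ := hAq
      have exT' : ∃ d ∈ T', IsCentralAxis d p q := by
        refine ⟨A, ?_, haxA⟩
        rw [hT']
        rcases hAor with rfl | rfl
        · exact Or.inr (Or.inl rfl)
        · exact Or.inr (Or.inr rfl)
      have notT : ¬ ∃ d ∈ T, IsCentralAxis d p q := by
        rintro ⟨d, hd, hax⟩
        have := axis_det_domino hax haxA
        subst this
        rcases hAor with rfl | rfl
        · exact hA1 hd
        · exact hA2 hd
      have hhq := (hh.2 p q e).2 notT
      refine ⟨fun _ => ?_, fun hnex => absurd exT' hnex⟩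
      simp [if_neg hq]
      linarith
    · -- edge not incident to v
      have hvmem : ∀ p' q' : Vertex, ({p, q} : Set Vertex) = {p', q'} →
          v = p' ∨ v = q' → False := by
        rintro p' q' hpq (rfl | rfl) <;> rw [Set.pair_eq_pair_iff] at hpq <;>
          rcases hpq with ⟨h1, h2⟩ | ⟨h1, h2⟩
        · exact hp h1
        · exact hq h2
        · exact hq h2
        · exact hp h1
      have hiff : (∃ d ∈ T', IsCentralAxis d p q) ↔ (∃ d ∈ T, IsCentralAxis d p q) := by
        constructor
        · rintro ⟨d, hd, hax⟩
          rw [hT'] at hd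
          rcases hd with ⟨hdT, _⟩ | hdA
          · exact ⟨d, hdT, hax⟩
          · exfalso
            rcases hdA with rfl | rfl
            · exact hvmem _ _ (axis_eq_axis hax hax3) (Or.inl rfl)
            · exact hvmem _ _ (axis_eq_axis hax hax4) (Or.inl rfl)
        · rintro ⟨d, hd, hax⟩
          refine ⟨d, ?_, hax⟩
          rw [hT']
          refine Or.inl ⟨hd, ?_⟩
          rintro (rfl | rfl)
          · exact hvmem _ _ (axis_eq_axis hax hax1) (Or.inr rfl)
          · exact hvmem _ _ (axis_eq_axis hax hax2) (Or.inr rfl)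
      constructor
      · intro hex
        have := (hh.2 p q e).1 (hiff.mp hex)
        simp only [if_neg hp, if_neg hq]
        linarith
      · intro hnex
        have := (hh.2 p q e).2 (fun hx => hnex (hiff.mpr hx))
        simp only [if_neg hp, if_neg hq]
        linarith


lemma pair_ne_pair {p q r s : Cell} (h : ¬((p = r ∧ q = s) ∨ (p = s ∧ q = r))) :
    ({p, q} : Set Cell) ≠ {r, s} := by
  rw [Ne, Set.pair_eq_pair_iff]; exact h

lemma flip_height {D : Set Cell} {O : Vertex} {T T' : Set (Set Cell)} {v : Vertex}
    (hT : IsTiling D T) (hO : IsBoundaryVertexOf D O)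
    (hflip : UpwardFlip D v T T') {h : Vertex → ℤ} (hh : IsHeightFunction D O T h) :
    IsHeightFunction D O T' (fun w => if w = v then h w + 4 else h w) := by
  obtain ⟨hint, hcase⟩ := hflip
  have hOv : O ≠ v := fun he => hint.2 (he ▸ hO.2)
  obtain ⟨x, y⟩ := v
  rcases hcase with ⟨hpar, hsub, hT'⟩ | ⟨hpar, hsub, hT'⟩
  · -- v has even coordinate sum
    simp only at hpar
    set dL : Set Cell := {(x - 1, y - 1), (x - 1, y)} with hdL
    set dR : Set Cell := {(x, y - 1), (x, y)} with hdR
    set dB : Set Cell := {(x - 1, y - 1), (x, y - 1)} with hdB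
    set dT : Set Cell := {(x - 1, y), (x, y)} with hdT
    have hRmem : dL ∈ T ∧ dR ∈ T := by
      constructor <;> apply hsub <;> simp [vDominoes, hdL, hdR]
    have hdLmem : ((x - 1, y - 1) : Cell) ∈ dL := by simp [hdL]
    have hAnotT : dB ∉ T ∧ dT ∉ T := by
      constructor <;> intro hmem
      · have hne : dB ≠ dL := pair_ne_pair (by simp only [Prod.mk.injEq, true_and, and_true, or_true, true_or] <;> omega)
        exact Set.disjoint_left.mp (hT.2.1 hmem hRmem.1 hne)
          (show ((x - 1, y - 1) : Cell) ∈ dB by simp [hdB]) hdLmem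
      · have hne : dT ≠ dL := pair_ne_pair (by simp only [Prod.mk.injEq, true_and, and_true, or_true, true_or] <;> omega)
        exact Set.disjoint_left.mp (hT.2.1 hmem hRmem.1 hne)
          (show ((x - 1, y) : Cell) ∈ dT by simp [hdT])
          (show ((x - 1, y) : Cell) ∈ dL by simp [hdL])
    refine flip_height_core (v := (x, y)) (in1 := (x - 1, y)) (in2 := (x + 1, y))
      (out1 := (x, y - 1)) (out2 := (x, y + 1))
      (R1 := dL) (R2 := dR) (A1 := dB) (A2 := dT)
      hRmem.1 hRmem.2 hAnotT.1 hAnotT.2 ?_ ?_ ?_ ?_ ?_ ?_ ?_ ?_ ?_ ?_ ?_ ?_ ?_ ?_ hOv hh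
    · simpa [vDominoes, hDominoes, hdL, hdR, hdB, hdT] using hT'
    · refine ⟨x - 1, y - 1, Or.inr ⟨?_, ?_⟩⟩
      · rw [hdL]; rw [Set.pair_eq_pair_iff]; simp only [Prod.mk.injEq, true_and, and_true, or_true, true_or] <;> omega
      · rw [Set.pair_eq_pair_iff]; simp only [Prod.mk.injEq, true_and, and_true, or_true, true_or] <;> omega
    · refine ⟨x, y - 1, Or.inr ⟨?_, ?_⟩⟩
      · rw [hdR]; rw [Set.pair_eq_pair_iff]; simp only [Prod.mk.injEq, true_and, and_true, or_true, true_or] <;> omega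
      · rw [Set.pair_eq_pair_iff]; simp only [Prod.mk.injEq, true_and, and_true, or_true, true_or] <;> omega
    · refine ⟨x - 1, y - 1, Or.inl ⟨?_, ?_⟩⟩
      · rw [hdB]; rw [Set.pair_eq_pair_iff]; simp only [Prod.mk.injEq, true_and, and_true, or_true, true_or] <;> omega
      · rw [Set.pair_eq_pair_iff]; simp only [Prod.mk.injEq, true_and, and_true, or_true, true_or] <;> omega
    · refine ⟨x - 1, y, Or.inl ⟨?_, ?_⟩⟩
      · rw [hdT]; rw [Set.pair_eq_pair_iff]; simp only [Prod.mk.injEq, true_and, and_true, or_true, true_or] <;> omega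
      · rw [Set.pair_eq_pair_iff]; simp only [Prod.mk.injEq, true_and, and_true, or_true, true_or] <;> omega
    · -- classification of edges incident to v
      intro p q e
      have hde := e.1
      simp only [Int.even_iff] at hpar
      constructor
      · intro hqv
        obtain ⟨px, py⟩ := p
        subst hqv
        rcases hde with ⟨hpe, hw | hw⟩ | ⟨hpe, hw | hw⟩ <;>
          simp only [Int.even_iff] at hpe <;>
          simp only [Prod.mk.injEq] at hw ⊢ <;> omega
      · intro hpv
        obtain ⟨qx, qy⟩ := q
        subst hpv
        rcases hde with ⟨hpe, hw | hw⟩ | ⟨hpe, hw | hw⟩ <;>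
          simp only [Int.even_iff] at hpe <;>
          simp only [Prod.mk.injEq] at hw ⊢ <;> omega
    all_goals (intro h1; simp only [Prod.ext_iff] at h1; omega)
  · -- v has odd coordinate sum
    simp only at hpar
    set dL : Set Cell := {(x - 1, y - 1), (x - 1, y)} with hdL
    set dR : Set Cell := {(x, y - 1), (x, y)} with hdR
    set dB : Set Cell := {(x - 1, y - 1), (x, y - 1)} with hdB
    set dT : Set Cell := {(x - 1, y), (x, y)} with hdT
    have hRmem : dB ∈ T ∧ dT ∈ T := by
      constructor <;> apply hsub <;> simp [hDominoes, hdB, hdT]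
    have hAnotT : dL ∉ T ∧ dR ∉ T := by
      constructor <;> intro hmem
      · have hne : dL ≠ dB := pair_ne_pair (by simp only [Prod.mk.injEq, true_and, and_true, or_true, true_or] <;> omega)
        exact Set.disjoint_left.mp (hT.2.1 hmem hRmem.1 hne)
          (show ((x - 1, y - 1) : Cell) ∈ dL by simp [hdL])
          (show ((x - 1, y - 1) : Cell) ∈ dB by simp [hdB])
      · have hne : dR ≠ dB := pair_ne_pair (by simp only [Prod.mk.injEq, true_and, and_true, or_true, true_or] <;> omega)
        exact Set.disjoint_left.mp (hT.2.1 hmem hRmem.1 hne)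
          (show ((x, y - 1) : Cell) ∈ dR by simp [hdR])
          (show ((x, y - 1) : Cell) ∈ dB by simp [hdB])
    refine flip_height_core (v := (x, y)) (in1 := (x, y - 1)) (in2 := (x, y + 1))
      (out1 := (x - 1, y)) (out2 := (x + 1, y))
      (R1 := dB) (R2 := dT) (A1 := dL) (A2 := dR)
      hRmem.1 hRmem.2 hAnotT.1 hAnotT.2 ?_ ?_ ?_ ?_ ?_ ?_ ?_ ?_ ?_ ?_ ?_ ?_ ?_ ?_ hOv hh
    · simpa [vDominoes, hDominoes, hdL, hdR, hdB, hdT] using hT'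
    · refine ⟨x - 1, y - 1, Or.inl ⟨?_, ?_⟩⟩
      · rw [hdB]; rw [Set.pair_eq_pair_iff]; simp only [Prod.mk.injEq, true_and, and_true, or_true, true_or] <;> omega
      · rw [Set.pair_eq_pair_iff]; simp only [Prod.mk.injEq, true_and, and_true, or_true, true_or] <;> omega
    · refine ⟨x - 1, y, Or.inl ⟨?_, ?_⟩⟩
      · rw [hdT]; rw [Set.pair_eq_pair_iff]; simp only [Prod.mk.injEq, true_and, and_true, or_true, true_or] <;> omega
      · rw [Set.pair_eq_pair_iff]; simp only [Prod.mk.injEq, true_and, and_true, or_true, true_or] <;> omega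
    · refine ⟨x - 1, y - 1, Or.inr ⟨?_, ?_⟩⟩
      · rw [hdL]; rw [Set.pair_eq_pair_iff]; simp only [Prod.mk.injEq, true_and, and_true, or_true, true_or] <;> omega
      · rw [Set.pair_eq_pair_iff]; simp only [Prod.mk.injEq, true_and, and_true, or_true, true_or] <;> omega
    · refine ⟨x, y - 1, Or.inr ⟨?_, ?_⟩⟩
      · rw [hdR]; rw [Set.pair_eq_pair_iff]; simp only [Prod.mk.injEq, true_and, and_true, or_true, true_or] <;> omega
      · rw [Set.pair_eq_pair_iff]; simp only [Prod.mk.injEq, true_and, and_true, or_true, true_or] <;> omega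
    · intro p q e
      have hde := e.1
      simp only [Int.even_iff] at hpar
      constructor
      · intro hqv
        obtain ⟨px, py⟩ := p
        subst hqv
        rcases hde with ⟨hpe, hw | hw⟩ | ⟨hpe, hw | hw⟩ <;>
          simp only [Int.even_iff] at hpe <;>
          simp only [Prod.mk.injEq] at hw ⊢ <;> omega
      · intro hpv
        obtain ⟨qx, qy⟩ := q
        subst hpv
        rcases hde with ⟨hpe, hw | hw⟩ | ⟨hpe, hw | hw⟩ <;>
          simp only [Int.even_iff] at hpe <;>
          simp only [Prod.mk.injEq] at hw ⊢ <;> omega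
    all_goals (intro h1; simp only [Prod.ext_iff] at h1; omega)


lemma flip_tiling_core {D : Set Cell} {T T' : Set (Set Cell)} {R1 R2 A1 A2 : Set Cell}
    (hT : IsTiling D T) (hR1 : R1 ∈ T) (hR2 : R2 ∈ T)
    (hT' : T' = (T \ {R1, R2}) ∪ {A1, A2})
    (hdom1 : IsDomino A1) (hdom2 : IsDomino A2)
    (hAA : Disjoint A1 A2) (hcover : A1 ∪ A2 = R1 ∪ R2) :
    IsTiling D T' := by
  have hRsub : ({R1, R2} : Set (Set Cell)) ⊆ T := by
    rintro z (rfl | rfl)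
    exacts [hR1, hR2]
  have hdisjR : ∀ c ∈ T \ ({R1, R2} : Set (Set Cell)), Disjoint c (R1 ∪ R2) := by
    intro c hc
    refine Set.disjoint_union_right.mpr ⟨?_, ?_⟩
    · exact hT.2.1 hc.1 hR1 (fun h => hc.2 (by simp [h]))
    · exact hT.2.1 hc.1 hR2 (fun h => hc.2 (by simp [h]))
  have hdisjA : ∀ c ∈ T \ ({R1, R2} : Set (Set Cell)), ∀ A ∈ ({A1, A2} : Set (Set Cell)),
      Disjoint c A := by
    intro c hc A hA
    refine (hdisjR c hc).mono_right ?_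
    rw [← hcover]
    rcases hA with rfl | hA
    · exact Set.subset_union_left
    · rw [Set.mem_singleton_iff] at hA
      subst hA
      exact Set.subset_union_right
  refine ⟨?_, ?_, ?_⟩
  · intro d hd
    rw [hT'] at hd
    rcases hd with ⟨hdT, _⟩ | hdA
    · exact hT.1 d hdT
    · rcases hdA with rfl | hdA
      · exact hdom1
      · rw [Set.mem_singleton_iff] at hdA; subst hdA; exact hdom2
  · intro a ha b hb hne
    rw [hT'] at ha hb
    rcases ha with ha | ha <;> rcases hb with hb | hb
    · exact hT.2.1 ha.1 hb.1 hne
    · exact hdisjA a ha b hb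
    · exact (hdisjA b hb a ha).symm
    · rcases ha with rfl | ha <;> rcases hb with rfl | hb
      · exact absurd rfl hne
      · rw [Set.mem_singleton_iff] at hb; subst hb; exact hAA
      · rw [Set.mem_singleton_iff] at ha; subst ha; exact hAA.symm
      · rw [Set.mem_singleton_iff] at ha hb; subst ha; subst hb; exact absurd rfl hne
  · have h1 : ⋃₀ T' = ⋃₀ (T \ {R1, R2}) ∪ (A1 ∪ A2) := by
      rw [hT', Set.sUnion_union, Set.sUnion_pair]
    have h2 : ⋃₀ ({R1, R2} : Set (Set Cell)) = R1 ∪ R2 := Set.sUnion_pair _ _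
    rw [h1, hcover, ← h2, ← Set.sUnion_union, Set.diff_union_of_subset hRsub]
    exact hT.2.2

lemma flip_tiling {D : Set Cell} {T T' : Set (Set Cell)} {v : Vertex}
    (hT : IsTiling D T) (hflip : UpwardFlip D v T T') : IsTiling D T' := by
  obtain ⟨_, hcase⟩ := hflip
  obtain ⟨x, y⟩ := v
  rcases hcase with ⟨hpar, hsub, hT'⟩ | ⟨hpar, hsub, hT'⟩
  · refine flip_tiling_core (R1 := {((x:ℤ) - 1, (y:ℤ) - 1), (x - 1, y)})
      (R2 := {((x:ℤ), (y:ℤ) - 1), (x, y)})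
      (A1 := {((x:ℤ) - 1, (y:ℤ) - 1), (x, y - 1)})
      (A2 := {((x:ℤ) - 1, (y:ℤ)), (x, y)}) hT
      (hsub (by simp [vDominoes])) (hsub (by simp [vDominoes]))
      (by simpa [vDominoes, hDominoes] using hT') ?_ ?_ ?_ ?_
    · refine ⟨x - 1, y - 1, Or.inl ?_⟩
      rw [Set.pair_eq_pair_iff]
      simp only [Prod.mk.injEq, true_and, and_true, or_true, true_or] <;> omega
    · refine ⟨x - 1, y, Or.inl ?_⟩
      rw [Set.pair_eq_pair_iff]
      simp only [Prod.mk.injEq, true_and, and_true, or_true, true_or] <;> omega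
    · rw [Set.disjoint_left]
      rintro ⟨a, b⟩ ha hb
      simp only [Set.mem_insert_iff, Set.mem_singleton_iff, Prod.mk.injEq] at ha hb
      omega
    · ext ⟨a, b⟩
      simp only [Set.mem_union, Set.mem_insert_iff, Set.mem_singleton_iff, Prod.mk.injEq]
      omega
  · refine flip_tiling_core (R1 := {((x:ℤ) - 1, (y:ℤ) - 1), (x, y - 1)})
      (R2 := {((x:ℤ) - 1, (y:ℤ)), (x, y)})
      (A1 := {((x:ℤ) - 1, (y:ℤ) - 1), (x - 1, y)})
      (A2 := {((x:ℤ), (y:ℤ) - 1), (x, y)}) hT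
      (hsub (by simp [hDominoes])) (hsub (by simp [hDominoes]))
      (by simpa [vDominoes, hDominoes] using hT') ?_ ?_ ?_ ?_
    · refine ⟨x - 1, y - 1, Or.inr ?_⟩
      rw [Set.pair_eq_pair_iff]
      simp only [Prod.mk.injEq, true_and, and_true, or_true, true_or] <;> omega
    · refine ⟨x, y - 1, Or.inr ?_⟩
      rw [Set.pair_eq_pair_iff]
      simp only [Prod.mk.injEq, true_and, and_true, or_true, true_or] <;> omega
    · rw [Set.disjoint_left]
      rintro ⟨a, b⟩ ha hb
      simp only [Set.mem_insert_iff, Set.mem_singleton_iff, Prod.mk.injEq] at ha hb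
      omega
    · ext ⟨a, b⟩
      simp only [Set.mem_union, Set.mem_insert_iff, Set.mem_singleton_iff, Prod.mk.injEq]
      omega


/-- along any sequence of upward flips from the minimal tiling
to a tiling `T`, the number of flips performed at an interior vertex `v`
equals `(h_T(v) - h_{T_min}(v)) / 4`; in particular it does not depend on the
sequence. -/
theorem normalized_height_counts_flips
    (D : Set Cell) (hD : IsDomain D)
    (O : Vertex) (hO : IsBoundaryVertexOf D O)
    (Tmin : Set (Set Cell))
    (hTmin : IsTiling D Tmin ∧
      ∀ T : Set (Set Cell), IsTiling D T → TilingLE D O Tmin T)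
    (T : Set (Set Cell)) (hT : IsTiling D T)
    (h hmin : Vertex → ℤ)
    (hh : IsHeightFunction D O T h) (hhmin : IsHeightFunction D O Tmin hmin)
    (p : ℕ) (f : ℕ → Set (Set Cell)) (vs : ℕ → Vertex)
    (hf0 : f 0 = Tmin) (hfp : f p = T)
    (hstep : ∀ i < p, UpwardFlip D (vs i) (f i) (f (i + 1))) :
    ∀ v : Vertex, IsInteriorVertexOf D v →
      4 * ((((Finset.range p).filter (fun i => vs i = v)).card : ℤ)) =
        h v - hmin v := by
  intro v hv
  have hinv : ∀ i, i ≤ p → IsTiling D (f i) ∧ IsHeightFunction D O (f i)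
      (fun w => hmin w + 4 * ((((Finset.range i).filter (fun j => vs j = w)).card : ℤ))) := by
    intro i
    induction i with
    | zero =>
      intro _
      have he : (fun w : Vertex => hmin w +
          4 * ((((Finset.range 0).filter (fun j => vs j = w)).card : ℤ))) = hmin := by
        funext w; simp
      rw [he, hf0]
      exact ⟨hTmin.1, hhmin⟩
    | succ i ih =>
      intro hi
      have hi' : i < p := Nat.lt_of_succ_le hi
      obtain ⟨hti, hhi⟩ := ih (Nat.le_of_lt hi')
      have hflip := hstep i hi'
      refine ⟨flip_tiling hti hflip, ?_⟩
      have hnew : IsHeightFunction D O (f (i + 1))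
          (fun w => if w = vs i
            then (hmin w + 4 * ((((Finset.range i).filter (fun j => vs j = w)).card : ℤ))) + 4
            else hmin w + 4 * ((((Finset.range i).filter (fun j => vs j = w)).card : ℤ))) :=
        flip_height hti hO hflip hhi
      have he : (fun w : Vertex => if w = vs i
            then (hmin w + 4 * ((((Finset.range i).filter (fun j => vs j = w)).card : ℤ))) + 4
            else hmin w + 4 * ((((Finset.range i).filter (fun j => vs j = w)).card : ℤ)))
          = (fun w => hmin w +
              4 * ((((Finset.range (i + 1)).filter (fun j => vs j = w)).card : ℤ))) := by
        funext w
        have hns : i ∉ Finset.range i := by simp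
        rw [Finset.range_add_one, Finset.filter_insert]
        by_cases hw : w = vs i
        · rw [if_pos hw, if_pos hw.symm,
            Finset.card_insert_of_notMem (fun hmem => hns (Finset.mem_filter.mp hmem).1)]
          push_cast
          ring
        · rw [if_neg hw, if_neg (fun hww => hw hww.symm)]
      exact he ▸ hnew
  have hfin := (hinv p le_rfl).2
  rw [hfp] at hfin
  have hvv : IsVertexOf D v := hv.1
  have heq := height_unique hD hO.1 hh hfin hvv
  rw [heq]
  ring

end DominoTiling
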